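/- Let T > 0 and C > 0. Let f¹, f² : [0,T] × ℝ → ℝ be continuous functions such that |f¹(s,y) − f¹(s,y')| ≤ C|y − y'| for all s ∈ [0,T] and y, y' ∈ ℝ, and f¹(s,y) ≥ f²(s,y) for all s, y. Let ε > 0 and ξ¹, ξ² ∈ ℝ with ξ¹ − ξ² ≥ ε. If Y¹ is a backward solution on [0,T] with terminal value ξ¹ driven by f¹, and Y² is a backward solution on [0,T] with terminal value ξ² driven by f², then Y¹_t − Y²_t ≥ ε·e^{−C(T−t)} for all t ∈ [0,T]; in particular Y¹_t > Y²_t for every t. -/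

import Mathlib

open intervalIntegral

/-- `Y` is a (backward) solution on `[0,T]` with terminal value `ξ` of the equation
driven by `f`: a continuous function satisfying `Y_t = ξ + ∫_t^T f(s, Y_s) ds`. -/
def IsBackwardSolution (T : ℝ) (f : ℝ → ℝ → ℝ) (ξ : ℝ) (Y : ℝ → ℝ) : Prop :=
  ContinuousOn Y (Set.Icc 0 T) ∧
    ∀ t ∈ Set.Icc 0 T, Y t = ξ + ∫ s in t..T, f s (Y s)

/-- Grönwall-type lower bound: if `G` is differentiable with `G' ≥ -C|G|` on `[0,b]` and
`G 0 ≥ ε > 0`, then `G u ≥ ε e^{-Cu}` on `[0,b]`. -/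
lemma gronwall_lower_aux {G G' : ℝ → ℝ} {b C ε : ℝ} (hC : 0 < C) (hε : 0 < ε)
    (hcont : Continuous G) (hderiv : ∀ u, HasDerivAt G (G' u) u)
    (hbound : ∀ u ∈ Set.Icc 0 b, -C * |G u| ≤ G' u) (h0 : ε ≤ G 0) :
    ∀ u ∈ Set.Icc 0 b, ε * Real.exp (-(C * u)) ≤ G u := by
  -- a Grönwall application on `[0, τ]`, valid whenever `G ≥ 0` there
  have key : ∀ τ ∈ Set.Icc 0 b, (∀ v ∈ Set.Ico 0 τ, 0 ≤ G v) →
      ∀ u ∈ Set.Icc 0 τ, ε * Real.exp (-(C * u)) ≤ G u := by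
    intro τ hτ hpos
    have H := le_gronwallBound_of_liminf_deriv_right_le (f := fun u => -G u)
      (f' := fun u => -G' u) (δ := -ε) (K := -C) (ε := 0) (a := 0) (b := τ)
      (hcont.neg.continuousOn)
      (fun x _ r hr => (((hderiv x).neg).hasDerivWithinAt).liminf_right_slope_le hr)
      (neg_le_neg h0)
      (by
        intro x hx
        have hx' : x ∈ Set.Icc 0 b := ⟨hx.1, le_trans hx.2.le hτ.2⟩
        have h1 := hbound x hx'
        have h2 : |G x| = G x := abs_of_nonneg (hpos x hx)
        rw [h2] at h1
        simp only [add_zero]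
        nlinarith)
    intro u hu
    have h5 : -G u ≤ gronwallBound (-ε) (-C) 0 (u - 0) := H u hu
    rw [sub_zero, gronwallBound_ε0, show -C * u = -(C * u) by ring] at h5
    linarith
  -- positivity of `G` on `[0, b]`
  have hpos : ∀ u ∈ Set.Icc 0 b, 0 < G u := by
    by_contra hcon
    push_neg at hcon
    obtain ⟨u₀, hu₀, hGu₀⟩ := hcon
    set S : Set ℝ := Set.Icc 0 u₀ ∩ G ⁻¹' Set.Iic 0 with hS
    have hSne : S.Nonempty := ⟨u₀, ⟨⟨hu₀.1, le_rfl⟩, hGu₀⟩⟩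
    have hScl : IsClosed S := isClosed_Icc.inter (isClosed_Iic.preimage hcont)
    have hSbdd : BddBelow S := ⟨0, fun x hx => hx.1.1⟩
    set τ := sInf S with hτdef
    have hτS : τ ∈ S := hScl.csInf_mem hSne hSbdd
    have hτIcc : τ ∈ Set.Icc 0 b := ⟨hτS.1.1, le_trans hτS.1.2 hu₀.2⟩
    have hposτ : ∀ v ∈ Set.Ico 0 τ, 0 ≤ G v := by
      intro v hv
      by_contra hGv
      push_neg at hGv
      have : v ∈ S := ⟨⟨hv.1, le_trans hv.2.le hτS.1.2⟩, hGv.le⟩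
      exact absurd (csInf_le hSbdd this) (not_le.mpr hv.2)
    have := key τ hτIcc hposτ τ ⟨hτS.1.1, le_rfl⟩
    have hexp : 0 < Real.exp (-(C * τ)) := Real.exp_pos _
    have hGτ : G τ ≤ 0 := hτS.2
    nlinarith
  intro u hu
  exact key b ⟨le_trans hu.1 hu.2, le_rfl⟩ (fun v hv => (hpos v ⟨hv.1, hv.2.le⟩).le) u hu

/-- Comparison theorem (deterministic case): if `f¹ ≥ f²`, `f¹` is Lipschitz in `y`
with constant `C`, and the terminal values satisfy `ξ¹ − ξ² ≥ ε > 0`, then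
`Y¹_t − Y²_t ≥ ε e^{−C(T−t)} > 0` for all `t ∈ [0,T]`. -/
theorem backward_comparison
    (T C : ℝ) (hT : 0 < T) (hC : 0 < C)
    (f₁ f₂ : ℝ → ℝ → ℝ)
    (hf₁cont : ContinuousOn (Function.uncurry f₁) (Set.Icc 0 T ×ˢ Set.univ))
    (hf₂cont : ContinuousOn (Function.uncurry f₂) (Set.Icc 0 T ×ˢ Set.univ))
    (hf₁Lip : ∀ s ∈ Set.Icc 0 T, ∀ y y' : ℝ, |f₁ s y - f₁ s y'| ≤ C * |y - y'|)
    (hcomp : ∀ s ∈ Set.Icc 0 T, ∀ y : ℝ, f₁ s y ≥ f₂ s y)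
    (ε : ℝ) (hε : 0 < ε)
    (ξ₁ ξ₂ : ℝ) (hξ : ξ₁ - ξ₂ ≥ ε)
    (Y₁ Y₂ : ℝ → ℝ)
    (hY₁ : IsBackwardSolution T f₁ ξ₁ Y₁)
    (hY₂ : IsBackwardSolution T f₂ ξ₂ Y₂) :
    ∀ t ∈ Set.Icc 0 T,
      Y₁ t - Y₂ t ≥ ε * Real.exp (-(C * (T - t))) ∧ Y₁ t > Y₂ t := by
  obtain ⟨hY₁c, hY₁eq⟩ := hY₁
  obtain ⟨hY₂c, hY₂eq⟩ := hY₂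
  -- projection of `ℝ` onto `[0, T]`
  set proj : ℝ → ℝ := fun s => max 0 (min s T) with hproj
  have hprojmem : ∀ s, proj s ∈ Set.Icc 0 T :=
    fun s => ⟨le_max_left _ _, max_le hT.le (min_le_right _ _)⟩
  have hprojeq : ∀ s ∈ Set.Icc 0 T, proj s = s := by
    intro s hs
    simp only [hproj]
    rw [min_eq_left hs.2, max_eq_right hs.1]
  have hprojcont : Continuous proj := continuous_const.max (continuous_id.min continuous_const)
  -- continuous global versions of the integrands
  have hY₁p : Continuous (fun s => Y₁ (proj s)) := hY₁c.comp_continuous hprojcont hprojmem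
  have hY₂p : Continuous (fun s => Y₂ (proj s)) := hY₂c.comp_continuous hprojcont hprojmem
  have c₁ : Continuous (fun s => f₁ (proj s) (Y₁ (proj s))) :=
    hf₁cont.comp_continuous (hprojcont.prodMk hY₁p) (fun s => ⟨hprojmem s, trivial⟩)
  have c₂ : Continuous (fun s => f₂ (proj s) (Y₂ (proj s))) :=
    hf₂cont.comp_continuous (hprojcont.prodMk hY₂p) (fun s => ⟨hprojmem s, trivial⟩)
  set h : ℝ → ℝ := fun s => f₁ (proj s) (Y₁ (proj s)) - f₂ (proj s) (Y₂ (proj s)) with hh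
  have hc : Continuous h := c₁.sub c₂
  -- the backward equations in terms of `h`
  have hZ : ∀ t ∈ Set.Icc 0 T, Y₁ t - Y₂ t = (ξ₁ - ξ₂) + ∫ s in t..T, h s := by
    intro t ht
    have hsub : ∀ s ∈ Set.uIcc t T, s ∈ Set.Icc 0 T := by
      intro s hs
      rw [Set.uIcc_of_le ht.2] at hs
      exact ⟨le_trans ht.1 hs.1, hs.2⟩
    have e₁ : (∫ s in t..T, f₁ s (Y₁ s)) = ∫ s in t..T, f₁ (proj s) (Y₁ (proj s)) := by
      apply intervalIntegral.integral_congr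
      intro s hs
      simp only [hprojeq s (hsub s hs)]
    have e₂ : (∫ s in t..T, f₂ s (Y₂ s)) = ∫ s in t..T, f₂ (proj s) (Y₂ (proj s)) := by
      apply intervalIntegral.integral_congr
      intro s hs
      simp only [hprojeq s (hsub s hs)]
    have esub : (∫ s in t..T, h s) = (∫ s in t..T, f₁ (proj s) (Y₁ (proj s))) -
        ∫ s in t..T, f₂ (proj s) (Y₂ (proj s)) :=
      intervalIntegral.integral_sub (c₁.intervalIntegrable _ _) (c₂.intervalIntegrable _ _)
    rw [hY₁eq t ht, hY₂eq t ht, e₁, e₂, esub]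
    ring
  -- the time-reversed difference
  set G : ℝ → ℝ := fun u => (ξ₁ - ξ₂) + ∫ s in (T - u)..T, h s with hG
  have hGderiv : ∀ u, HasDerivAt G (h (T - u)) u := by
    intro u
    have hF : HasDerivAt (fun t => ∫ s in t..T, h s) (-h (T - u)) (T - u) :=
      intervalIntegral.integral_hasDerivAt_left (hc.intervalIntegrable _ _)
        (hc.stronglyMeasurable.stronglyMeasurableAtFilter) hc.continuousAt
    have hlin : HasDerivAt (fun x : ℝ => T - x) (-1) u := (hasDerivAt_id u).const_sub T
    have := (hF.comp u hlin).const_add (ξ₁ - ξ₂)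
    simpa [hG] using this
  have hGcont : Continuous G := by
    rw [continuous_iff_continuousAt]
    exact fun u => (hGderiv u).continuousAt
  have hGW : ∀ u ∈ Set.Icc 0 T, G u = Y₁ (T - u) - Y₂ (T - u) := by
    intro u hu
    have hTu : T - u ∈ Set.Icc 0 T := ⟨by linarith [hu.2], by linarith [hu.1]⟩
    rw [hZ (T - u) hTu]
  have hG0 : ε ≤ G 0 := by
    simp only [hG, sub_zero, intervalIntegral.integral_same, add_zero]
    linarith
  have hGbound : ∀ u ∈ Set.Icc 0 T, -C * |G u| ≤ h (T - u) := by
    intro u hu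
    have hTu : T - u ∈ Set.Icc 0 T := ⟨by linarith [hu.2], by linarith [hu.1]⟩
    have hpe : proj (T - u) = T - u := hprojeq _ hTu
    have heq : h (T - u) = f₁ (T - u) (Y₁ (T - u)) - f₂ (T - u) (Y₂ (T - u)) := by
      simp only [hh, hpe]
    have h1 : f₂ (T - u) (Y₂ (T - u)) ≤ f₁ (T - u) (Y₂ (T - u)) := hcomp _ hTu _
    have h2 : |f₁ (T - u) (Y₁ (T - u)) - f₁ (T - u) (Y₂ (T - u))| ≤
        C * |Y₁ (T - u) - Y₂ (T - u)| := hf₁Lip _ hTu _ _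
    have h3 := neg_abs_le (f₁ (T - u) (Y₁ (T - u)) - f₁ (T - u) (Y₂ (T - u)))
    have h4 : G u = Y₁ (T - u) - Y₂ (T - u) := hGW u hu
    rw [heq, h4]
    linarith
  have main := gronwall_lower_aux hC hε hGcont hGderiv hGbound hG0
  intro t ht
  have hTt : T - t ∈ Set.Icc 0 T := ⟨by linarith [ht.2], by linarith [ht.1]⟩
  have h1 := main (T - t) hTt
  have h2 : G (T - t) = Y₁ t - Y₂ t := by
    have := hGW (T - t) hTt
    rw [this]
    norm_num
  rw [h2] at h1
  have hexp : 0 < ε * Real.exp (-(C * (T - t))) := mul_pos hε (Real.exp_pos _)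
  exact ⟨h1, by linarith⟩
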